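/- Let V be a finite set, let W be a nonempty proper subset of V, let q = |V ∖ W|, and let λ ∈ ℝ^V have all coordinates strictly positive. Let t, (s_i)_{i ∈ V∖W} be independent random variables, where t is Gamma-distributed with shape |W| and rate ∑_{i∈W} λ_i, and each s_i is Exponentially distributed with rate λ_i. Then ∑_σ P(t ≤ s_{σ(1)} ≤ s_{σ(2)} ≤ ⋯ ≤ s_{σ(q)}) = (∑_{i∈W} λ_i / ∑_{i∈V} λ_i)^{|W|}, where the sum runs over all bijections σ: {1, …, q} → V ∖ W. -/

import Mathlib

open scoped ENNReal NNReal
open MeasureTheory ProbabilityTheory Finset Real Set Function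

namespace Stmt12Aux

instance noAtoms_gammaMeasure (a r : ℝ) : NullSingletonClass (gammaMeasure a r) := by
  constructor
  intro x
  rw [gammaMeasure, withDensity_apply _ (measurableSet_singleton x)]
  exact setLIntegral_measure_zero _ _ (Real.volume_singleton)

lemma exponentialPDF_eq_gammaPDF (r : ℝ) : exponentialPDF r = gammaPDF 1 r := rfl

lemma gammaMeasure_one_Ici_of_neg {r t : ℝ} (hr : 0 < r) (ht : t < 0) :
    gammaMeasure 1 r (Ici t) = 1 := by
  have : IsProbabilityMeasure (gammaMeasure 1 r) := isProbabilityMeasure_gammaMeasure zero_lt_one hr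
  have h0 : gammaMeasure 1 r (Iio t) = 0 := by
    rw [gammaMeasure, withDensity_apply _ measurableSet_Iio]
    exact lintegral_gammaPDF_of_nonpos ht.le
  rw [← compl_Iio, measure_compl measurableSet_Iio (measure_ne_top _ _), h0, measure_univ,
    tsub_zero]

lemma gammaMeasure_one_Ici_of_nonneg {r t : ℝ} (hr : 0 < r) (ht : 0 ≤ t) :
    gammaMeasure 1 r (Ici t) = ENNReal.ofReal (rexp (-(r * t))) := by
  have : IsProbabilityMeasure (gammaMeasure 1 r) := isProbabilityMeasure_gammaMeasure zero_lt_one hr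
  have hIic : gammaMeasure 1 r (Iic t) = ENNReal.ofReal (1 - rexp (-(r * t))) := by
    rw [gammaMeasure, withDensity_apply _ measurableSet_Iic, ← exponentialPDF_eq_gammaPDF,
      lintegral_exponentialPDF_eq_antiDeriv hr t, if_pos ht]
  have hIio : gammaMeasure 1 r (Iio t) = ENNReal.ofReal (1 - rexp (-(r * t))) := by
    rw [← hIic]; exact measure_congr Iio_ae_eq_Iic
  have hexp : rexp (-(r * t)) ≤ 1 := by
    rw [Real.exp_le_one_iff]; nlinarith
  rw [← compl_Iio, measure_compl measurableSet_Iio (measure_ne_top _ _), hIio, measure_univ,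
    ← ENNReal.ofReal_one, ← ENNReal.ofReal_sub _ (by linarith), sub_sub_cancel]



lemma pi_eq_null {ι : Type*} [Fintype ι] [DecidableEq ι] (μ : ι → Measure ℝ)
    [∀ i, IsProbabilityMeasure (μ i)] [∀ i, NullSingletonClass (μ i)] {i j : ι} (hij : i ≠ j) :
    Measure.pi μ {x : ι → ℝ | x i = x j} = 0 := by
  classical
  have hmp := measurePreserving_piEquivPiSubtypeProd μ (fun k => k = i)
  set T : Set ((∀ k : {k // k = i}, ℝ) × (∀ k : {k // ¬ k = i}, ℝ)) :=
    {y | y.1 ⟨i, rfl⟩ = y.2 ⟨j, fun h => hij (h ▸ rfl)⟩} with hT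
  have hTm : MeasurableSet T := by
    apply measurableSet_eq_fun
    · exact (measurable_pi_apply _).comp measurable_fst
    · exact (measurable_pi_apply _).comp measurable_snd
  have hpre : {x : ι → ℝ | x i = x j} =
      (MeasurableEquiv.piEquivPiSubtypeProd (fun _ : ι => ℝ) (fun k => k = i)) ⁻¹' T := rfl
  rw [hpre, hmp.measure_preimage hTm.nullMeasurableSet, Measure.prod_apply hTm]
  have h0 : ∀ a : ∀ k : {k // k = i}, ℝ, (Measure.pi fun k : {k // ¬ k = i} => μ k)
      {b | (a, b) ∈ T} = 0 := by
    intro a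
    have heq : {b : ∀ k : {k // ¬ k = i}, ℝ | (a, b) ∈ T} =
        eval (⟨j, fun h => hij (h ▸ rfl)⟩ : {k // ¬ k = i}) ⁻¹'
          ({a ⟨i, rfl⟩} : Set ℝ) := by
      ext b
      simp [hT, eq_comm]
    rw [heq]
    exact Measure.pi_eval_preimage_null _ (measure_singleton _)
  exact (lintegral_congr h0).trans lintegral_zero

lemma monotone_cons_of {n : ℕ} {t : ℝ} {f : Fin n → ℝ} (h0 : ∀ j, t ≤ f j)
    (hf : Monotone f) : Monotone (Fin.cons t f) := by
  intro a b hab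
  induction a using Fin.cases with
  | zero =>
    induction b using Fin.cases with
    | zero => exact le_refl _
    | succ j => simpa using h0 j
  | succ i =>
    induction b using Fin.cases with
    | zero => exact absurd hab (by simp [Fin.le_def])
    | succ j => simpa using hf (Fin.succ_le_succ_iff.mp hab)

lemma le_of_monotone_cons {n : ℕ} {t : ℝ} {f : Fin n → ℝ}
    (h : Monotone (Fin.cons t f)) (j : Fin n) : t ≤ f j := by
  simpa using h (Fin.zero_le j.succ)

lemma monotone_of_monotone_cons {n : ℕ} {t : ℝ} {f : Fin n → ℝ}
    (h : Monotone (Fin.cons t f)) : Monotone f := by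
  intro a b hab
  simpa using h (Fin.succ_le_succ_iff.mpr hab)

end Stmt12Aux

open Stmt12Aux Function

theorem statement12 {V : Type*} [Fintype V] [DecidableEq V]
    (W : Finset V) (hW : W.Nonempty) (hWproper : W ≠ Finset.univ)
    (l : V → ℝ) (hl : ∀ i, 0 < l i) :
    ∑ σ : Fin Wᶜ.card ≃ {i // i ∈ Wᶜ},
      ((Measure.prod
          (gammaMeasure (W.card : ℝ) (∑ i ∈ W, l i))
          (Measure.pi fun i : {i // i ∈ Wᶜ} => gammaMeasure 1 (l i.1)))
        {p : ℝ × ({i // i ∈ Wᶜ} → ℝ) |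
          Monotone (Fin.cons p.1 (fun j => p.2 (σ j)) : Fin (Wᶜ.card + 1) → ℝ)}).toReal
      = ((∑ i ∈ W, l i) / ∑ i, l i) ^ W.card := by
  classical
  set q := Wᶜ.card with hq
  set ρ := ∑ i ∈ W, l i with hρdef
  have hρ : 0 < ρ := Finset.sum_pos (fun i _ => hl i) hW
  have hcardpos : 0 < (W.card : ℝ) := by
    exact_mod_cast Finset.card_pos.mpr hW
  set μ := gammaMeasure (W.card : ℝ) ρ with hμdef
  set ν := Measure.pi fun i : {i // i ∈ Wᶜ} => gammaMeasure 1 (l i.1) with hνdef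
  haveI : ∀ i : {i // i ∈ Wᶜ}, IsProbabilityMeasure (gammaMeasure 1 (l i.1)) :=
    fun i => isProbabilityMeasure_gammaMeasure zero_lt_one (hl i.1)
  haveI : IsProbabilityMeasure μ := isProbabilityMeasure_gammaMeasure hcardpos hρ
  haveI : IsProbabilityMeasure ν := Measure.pi.instIsProbabilityMeasure _
  set S : (Fin q ≃ {i // i ∈ Wᶜ}) → Set (ℝ × ({i // i ∈ Wᶜ} → ℝ)) :=
    fun σ => {p | Monotone (Fin.cons p.1 (fun j => p.2 (σ j)) : Fin (q + 1) → ℝ)} with hSdef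
  set T : Set (ℝ × ({i // i ∈ Wᶜ} → ℝ)) := {p | ∀ i, p.1 ≤ p.2 i} with hTdef
  have hc : ∀ (σ : Fin q ≃ {i // i ∈ Wᶜ}) (i : Fin (q + 1)),
      Measurable fun p : ℝ × ({i // i ∈ Wᶜ} → ℝ) =>
        (Fin.cons p.1 (fun j => p.2 (σ j)) : Fin (q + 1) → ℝ) i := by
    intro σ i
    induction i using Fin.cases with
    | zero => simpa using measurable_fst
    | succ j => simpa [Function.comp_def] using (measurable_pi_apply (σ j)).comp measurable_snd
  have hSm : ∀ σ, MeasurableSet (S σ) := by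
    intro σ
    have hrw : S σ = ⋂ i, ⋂ j, ⋂ (_ : i ≤ j),
        {p : ℝ × ({i // i ∈ Wᶜ} → ℝ) |
          (Fin.cons p.1 (fun k => p.2 (σ k)) : Fin (q + 1) → ℝ) i ≤
          (Fin.cons p.1 (fun k => p.2 (σ k)) : Fin (q + 1) → ℝ) j} := by
      ext p
      simp only [hSdef, Set.mem_setOf_eq, Set.mem_iInter]
      exact ⟨fun h i j hij => h hij, fun h a b hab => h a b hab⟩
    rw [hrw]
    exact MeasurableSet.iInter fun i => MeasurableSet.iInter fun j =>
      MeasurableSet.iInter fun _ => measurableSet_le (hc σ i) (hc σ j)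
  have hTmeas : MeasurableSet T := by
    have hrw : T = ⋂ i : {i // i ∈ Wᶜ}, {p : ℝ × ({i // i ∈ Wᶜ} → ℝ) | p.1 ≤ p.2 i} := by
      ext p; simp [hTdef]
    rw [hrw]
    exact MeasurableSet.iInter fun i =>
      measurableSet_le measurable_fst ((measurable_pi_apply i).comp measurable_snd)
  -- a.e. injectivity of coordinates
  have hae : ∀ᵐ p : ℝ × ({i // i ∈ Wᶜ} → ℝ) ∂(μ.prod ν), Function.Injective p.2 := by
    have hall : ∀ᵐ p : ℝ × ({i // i ∈ Wᶜ} → ℝ) ∂(μ.prod ν),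
        ∀ i j : {i // i ∈ Wᶜ}, i ≠ j → p.2 i ≠ p.2 j := by
      rw [ae_all_iff]
      intro i
      rw [ae_all_iff]
      intro j
      rcases eq_or_ne i j with rfl | hij
      · filter_upwards with p h
        exact absurd rfl h
      · have hnull : (μ.prod ν) {p : ℝ × ({i // i ∈ Wᶜ} → ℝ) | p.2 i = p.2 j} = 0 := by
          have hA : MeasurableSet {x : {i // i ∈ Wᶜ} → ℝ | x i = x j} :=
            measurableSet_eq_fun (measurable_pi_apply i) (measurable_pi_apply j)
          have hpre : {p : ℝ × ({i // i ∈ Wᶜ} → ℝ) | p.2 i = p.2 j} =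
              Prod.snd ⁻¹' {x : {i // i ∈ Wᶜ} → ℝ | x i = x j} := rfl
          rw [hpre, ← Measure.map_apply measurable_snd hA, Measure.map_snd_prod]
          simp [hνdef, pi_eq_null _ hij]
        filter_upwards [compl_mem_ae_iff.mpr hnull] with p hp _
        exact hp
    filter_upwards [hall] with p hp a b hab
    by_contra hne
    exact hp a b hne hab
  have hST : ∀ (σ : Fin q ≃ {i // i ∈ Wᶜ}) (p : ℝ × ({i // i ∈ Wᶜ} → ℝ)),
      p ∈ S σ → p ∈ T := by
    intro σ p hp i
    have h := le_of_monotone_cons hp (σ.symm i)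
    simpa using h
  have hunique : ∀ p : ℝ × ({i // i ∈ Wᶜ} → ℝ), Function.Injective p.2 → p ∈ T →
      ∃! σ : Fin q ≃ {i // i ∈ Wᶜ}, p ∈ S σ := by
    intro p hinj hpT
    have hcard : Fintype.card {i // i ∈ Wᶜ} = q := Fintype.card_coe _
    set e : {i // i ∈ Wᶜ} ≃ Fin q := Fintype.equivFinOfCardEq hcard with hedef
    set σ0 : Fin q ≃ {i // i ∈ Wᶜ} :=
      (Tuple.sort (fun j => p.2 (e.symm j))).trans e.symm with hσ0def
    have hmono : Monotone fun j => p.2 (σ0 j) := by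
      have h := Tuple.monotone_sort (fun j => p.2 (e.symm j))
      simpa [hσ0def, Function.comp_def] using h
    have hrange : ∀ τ : Fin q ≃ {i // i ∈ Wᶜ},
        Set.range (fun j => p.2 (τ j)) = Set.range p.2 := by
      intro τ
      rw [show (fun j => p.2 (τ j)) = p.2 ∘ τ from rfl, Set.range_comp,
        Equiv.range_eq_univ, Set.image_univ]
    refine ⟨σ0, monotone_cons_of (fun j => hpT _) hmono, ?_⟩
    intro σ hσ
    have hm1 : Monotone fun j => p.2 (σ j) := monotone_of_monotone_cons hσ
    have hs1 : StrictMono fun j => p.2 (σ j) :=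
      hm1.strictMono_of_injective (hinj.comp σ.injective)
    have hs0 : StrictMono fun j => p.2 (σ0 j) :=
      hmono.strictMono_of_injective (hinj.comp σ0.injective)
    have instwf : WellFoundedLT (Fin q) := inferInstance
    have hfeq : (fun j => p.2 (σ j)) = fun j => p.2 (σ0 j) :=
      (@StrictMono.range_inj (Fin q) ℝ _ _ instwf _ _ hs1 hs0).mp
        ((hrange σ).trans (hrange σ0).symm)
    exact Equiv.ext fun j => hinj (congrFun hfeq j)
  -- sum of measures equals measure of T
  have key : ∑ σ : Fin q ≃ {i // i ∈ Wᶜ}, (μ.prod ν) (S σ) = (μ.prod ν) T := by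
    have h1 : ∀ σ, (μ.prod ν) (S σ) =
        ∫⁻ p, (S σ).indicator (1 : ℝ × ({i // i ∈ Wᶜ} → ℝ) → ℝ≥0∞) p ∂(μ.prod ν) := by
      intro σ
      rw [lintegral_indicator_one (hSm σ)]
    calc ∑ σ : Fin q ≃ {i // i ∈ Wᶜ}, (μ.prod ν) (S σ)
        = ∑ σ : Fin q ≃ {i // i ∈ Wᶜ},
            ∫⁻ p, (S σ).indicator (1 : ℝ × ({i // i ∈ Wᶜ} → ℝ) → ℝ≥0∞) p ∂(μ.prod ν) := by
          exact Finset.sum_congr rfl fun σ _ => h1 σ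
      _ = ∫⁻ p, ∑ σ : Fin q ≃ {i // i ∈ Wᶜ},
            (S σ).indicator (1 : ℝ × ({i // i ∈ Wᶜ} → ℝ) → ℝ≥0∞) p ∂(μ.prod ν) := by
          rw [lintegral_finset_sum _ fun σ _ => measurable_one.indicator (hSm σ)]
      _ = ∫⁻ p, T.indicator (1 : ℝ × ({i // i ∈ Wᶜ} → ℝ) → ℝ≥0∞) p ∂(μ.prod ν) := by
          refine lintegral_congr_ae ?_
          filter_upwards [hae] with p hp
          by_cases hpT : p ∈ T
          · obtain ⟨σ0, h0, hu⟩ := hunique p hp hpT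
            rw [Set.indicator_of_mem hpT, Finset.sum_eq_single σ0]
            · rw [Set.indicator_of_mem h0]
            · intro σ _ hne
              exact Set.indicator_of_notMem (fun hmem => hne (hu σ hmem)) _
            · intro h
              exact absurd (Finset.mem_univ σ0) h
          · rw [Set.indicator_of_notMem hpT]
            exact Finset.sum_eq_zero fun σ _ =>
              Set.indicator_of_notMem (fun hmem => hpT (hST σ p hmem)) _
      _ = (μ.prod ν) T := lintegral_indicator_one hTmeas
  -- computing the measure of T
  have htotal : (0:ℝ) < ∑ i, l i := Finset.sum_pos (fun i _ => hl i) ⟨hW.choose, Finset.mem_univ _⟩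
  have hsplit : ρ + ∑ i ∈ Wᶜ, l i = ∑ i, l i := Finset.sum_add_sum_compl W l
  have hTval : (μ.prod ν) T = ENNReal.ofReal ((ρ / ∑ i, l i) ^ W.card) := by
    rw [Measure.prod_apply hTmeas]
    have hν : ∀ t : ℝ, ν (Prod.mk t ⁻¹' T) =
        ∏ i : {i // i ∈ Wᶜ}, gammaMeasure 1 (l i.1) (Ici t) := by
      intro t
      have hsec : (Prod.mk t ⁻¹' T) = Set.pi Set.univ (fun _ : {i // i ∈ Wᶜ} => Ici t) := by
        ext s
        simp only [Set.mem_preimage, hTdef, Set.mem_setOf_eq, Set.mem_pi, Set.mem_univ,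
          Set.mem_Ici, forall_const, true_implies]
      rw [hsec, hνdef, Measure.pi_pi]
    have hpt : ∀ t : ℝ, gammaPDF (W.card : ℝ) ρ t * ν (Prod.mk t ⁻¹' T) =
        ENNReal.ofReal ((ρ / ∑ i, l i) ^ W.card) *
          gammaPDF (W.card : ℝ) (∑ i, l i) t := by
      intro t
      rcases lt_or_ge t 0 with ht | ht
      · rw [gammaPDF_of_neg ht, gammaPDF_of_neg ht, zero_mul, mul_zero]
      · rw [hν t]
        have hIci : ∀ i : {i // i ∈ Wᶜ}, gammaMeasure 1 (l i.1) (Ici t) =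
            ENNReal.ofReal (rexp (-(l i.1 * t))) :=
          fun i => gammaMeasure_one_Ici_of_nonneg (hl i.1) ht
        rw [Finset.prod_congr rfl fun i _ => hIci i,
          ← ENNReal.ofReal_prod_of_nonneg (fun i _ => (Real.exp_pos _).le)]
        have hprod : ∏ i : {i // i ∈ Wᶜ}, rexp (-(l i.1 * t)) =
            rexp (-((∑ i ∈ Wᶜ, l i) * t)) := by
          rw [← Real.exp_sum]
          congr 1
          rw [Finset.sum_coe_sort Wᶜ (fun i => -(l i * t)), Finset.sum_neg_distrib,
            ← Finset.sum_mul]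
        have hnn1 : (0:ℝ) ≤ ρ ^ ((W.card:ℝ)) / Real.Gamma (W.card:ℝ) *
            t ^ ((W.card:ℝ) - 1) * rexp (-(ρ * t)) := by
          have h1 : (0:ℝ) ≤ ρ ^ ((W.card:ℝ)) := (Real.rpow_pos_of_pos hρ _).le
          have h2 : (0:ℝ) < Real.Gamma (W.card:ℝ) := Real.Gamma_pos_of_pos hcardpos
          have h3 : (0:ℝ) ≤ t ^ ((W.card:ℝ) - 1) := Real.rpow_nonneg ht _
          have h4 : (0:ℝ) ≤ rexp (-(ρ * t)) := (Real.exp_pos _).le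
          exact mul_nonneg (mul_nonneg (div_nonneg h1 h2.le) h3) h4
        have hnn2 : (0:ℝ) ≤ (ρ / ∑ i, l i) ^ W.card :=
          pow_nonneg (div_nonneg hρ.le htotal.le) _
        rw [hprod, gammaPDF_of_nonneg ht, gammaPDF_of_nonneg ht,
          ← ENNReal.ofReal_mul hnn1, ← ENNReal.ofReal_mul hnn2]
        congr 1
        have hΓ : Real.Gamma (W.card : ℝ) > 0 := Real.Gamma_pos_of_pos hcardpos
        have hrpowρ : ρ ^ (W.card : ℝ) = ρ ^ W.card := Real.rpow_natCast ρ W.card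
        have hrpowT : (∑ i, l i) ^ (W.card : ℝ) = (∑ i, l i) ^ W.card :=
          Real.rpow_natCast _ W.card
        have hexp : rexp (-(ρ * t)) * rexp (-((∑ i ∈ Wᶜ, l i) * t)) =
            rexp (-((∑ i, l i) * t)) := by
          rw [← Real.exp_add]
          congr 1
          rw [← hsplit]
          ring
        have hcoef : (ρ / ∑ i, l i) ^ W.card * (∑ i, l i) ^ W.card = ρ ^ W.card := by
          rw [← mul_pow, div_mul_cancel₀ _ htotal.ne']
        calc ρ ^ (W.card : ℝ) / Real.Gamma (W.card : ℝ) * t ^ ((W.card : ℝ) - 1) *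
              rexp (-(ρ * t)) * rexp (-((∑ i ∈ Wᶜ, l i) * t))
            = ρ ^ W.card / Real.Gamma (W.card : ℝ) * t ^ ((W.card : ℝ) - 1) *
              rexp (-((∑ i, l i) * t)) := by
              rw [hrpowρ, mul_assoc _ _ (rexp _), mul_assoc _ _ (rexp _), hexp, ← mul_assoc]
          _ = (ρ / ∑ i, l i) ^ W.card *
              ((∑ i, l i) ^ (W.card : ℝ) / Real.Gamma (W.card : ℝ) *
                t ^ ((W.card : ℝ) - 1) * rexp (-((∑ i, l i) * t))) := by
              rw [hrpowT, ← hcoef]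
              ring
    have hpdfm1 : Measurable (gammaPDF (W.card : ℝ) ρ) :=
      (measurable_gammaPDFReal _ _).ennreal_ofReal
    have hpdfm2 : Measurable (gammaPDF (W.card : ℝ) (∑ i, l i)) :=
      (measurable_gammaPDFReal _ _).ennreal_ofReal
    rw [show μ = volume.withDensity (gammaPDF (W.card : ℝ) ρ) from rfl,
      lintegral_withDensity_eq_lintegral_mul _ hpdfm1
        (measurable_measure_prodMk_left hTmeas)]
    simp only [Pi.mul_apply]
    rw [lintegral_congr hpt, lintegral_const_mul _ hpdfm2,
      lintegral_gammaPDF_eq_one hcardpos htotal, mul_one]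
  -- conclude
  rw [← ENNReal.toReal_sum (fun σ _ => measure_ne_top _ _), key, hTval,
    ENNReal.toReal_ofReal (pow_nonneg (div_nonneg hρ.le htotal.le) _)]
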